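/- arXiv:1407.2464 — 8 statements merged into one kernel-verified Lean document; each statement's English description precedes it below -/
import Mathlib

section
/- Let G be a finite connected simple graph. Then G is chordful (i.e., the vertex set of every cycle of G induces a clique) if and only if the graphical building set 𝓑(G) is closed under intersection, i.e., for all B, B' ∈ 𝓑(G) with B ∩ B' ≠ ∅ one has B ∩ B' ∈ 𝓑(G). -/
/-- The graphical building set of a graph `G`: all nonempty subsets of vertices
inducing a connected subgraph of `G`. -/
def graphBuilding {V : Type*} (G : SimpleGraph V) : Set (Finset V) :=
  {B | B.Nonempty ∧ (G.induce (B : Set V)).Connected}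

/-- A graph is chordful if the vertex set of every cycle induces a clique. -/
def Chordful {V : Type*} (G : SimpleGraph V) : Prop :=
  ∀ (v : V) (c : G.Walk v v), c.IsCycle → G.IsClique {x | x ∈ c.support}

open SimpleGraph Walk
set_option linter.unusedSectionVars false
section Helpers
variable {V : Type*} [DecidableEq V] {G : SimpleGraph V}

private lemma walk_adj_of_length_eq_one {x y : V} (p : G.Walk x y) (h : p.length = 1) :
    G.Adj x y := by
  cases p with
  | nil => simp at h
  | cons h' p' =>
    have h0 : p'.length = 0 := by simpa using h
    have := p'.eq_of_length_eq_zero h0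
    subst this
    exact h'

private lemma isPath_loop_eq_nil {v : V} (p : G.Walk v v) (hp : p.IsPath) : p = Walk.nil := by
  have : (⟨p, hp⟩ : G.Path v v) = SimpleGraph.Path.nil := SimpleGraph.Path.loop_eq _
  exact congrArg Subtype.val this

private lemma edge_not_mem_of_isPath {x y : V} (p : G.Walk x y) (hp : p.IsPath)
    (h2 : 2 ≤ p.length) : s(x, y) ∉ p.edges := by
  cases p with
  | nil => simp
  | @cons _ b _ h' p' =>
    intro hmem
    rw [Walk.edges_cons, List.mem_cons] at hmem
    rcases hmem with he | he
    · rw [Sym2.eq_iff] at he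
      rcases he with ⟨-, rfl⟩ | ⟨hxb, -⟩
      · have hnil := isPath_loop_eq_nil p' hp.of_cons
        subst hnil
        simp at h2
      · exact h'.ne hxb
    · exact ((Walk.cons_isPath_iff h' p').mp hp).2 (Walk.fst_mem_support_of_mem_edges p' he)

private lemma adj_of_two_disjoint_paths (hch : Chordful G) {x y : V} (hxy : x ≠ y)
    (p q : G.Walk x y) (hp : p.IsPath) (hq : q.IsPath)
    (hdisj : ∀ a, a ∈ p.support → a ∈ q.support → a = x ∨ a = y) : G.Adj x y := by
  by_cases hp1 : p.length = 1
  · exact walk_adj_of_length_eq_one p hp1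
  by_cases hq1 : q.length = 1
  · exact walk_adj_of_length_eq_one q hq1
  have hp0 : p.length ≠ 0 := fun h => hxy (p.eq_of_length_eq_zero h)
  have hq0 : q.length ≠ 0 := fun h => hxy (q.eq_of_length_eq_zero h)
  have hp2 : 2 ≤ p.length := by omega
  have hq2 : 2 ≤ q.length := by omega
  set w : G.Walk x x := p.append q.reverse with hw
  have hqrev : q.reverse.IsPath := hq.reverse
  have hxyq : s(x, y) ∉ q.edges := edge_not_mem_of_isPath q hq hq2
  have hwtrail : w.IsTrail := by
    rw [Walk.isTrail_def, hw, Walk.edges_append, List.nodup_append']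
    refine ⟨hp.isTrail.edges_nodup, hqrev.isTrail.edges_nodup, ?_⟩
    intro e hep heq
    have heq' : e ∈ q.edges := by
      rwa [Walk.edges_reverse, List.mem_reverse] at heq
    induction e with
    | h a b =>
      have hab : G.Adj a b := Walk.adj_of_mem_edges p hep
      have ha : a = x ∨ a = y := hdisj a (Walk.fst_mem_support_of_mem_edges p hep)
        (Walk.fst_mem_support_of_mem_edges q heq')
      have hb : b = x ∨ b = y := hdisj b (Walk.snd_mem_support_of_mem_edges p hep)
        (Walk.snd_mem_support_of_mem_edges q heq')
      rcases ha with rfl | rfl <;> rcases hb with rfl | rfl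
      · exact hab.ne rfl
      · exact edge_not_mem_of_isPath p hp hp2 hep
      · exact hxyq (by rwa [Sym2.eq_swap] at heq')
      · exact hab.ne rfl
  have hlenw : w.length = p.length + q.length := by
    rw [hw, Walk.length_append, Walk.length_reverse]
  have hwnodup : w.support.tail.Nodup := by
    have htail : w.support.tail = p.support.tail ++ q.reverse.support.tail := by
      rw [hw, Walk.support_append, p.support_eq_cons]; simp
    rw [htail, List.nodup_append']
    refine ⟨(List.tail_sublist _).nodup hp.support_nodup,
      (List.tail_sublist _).nodup hqrev.support_nodup, ?_⟩
    intro a hap haq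
    have hap' : a ∈ p.support := List.mem_of_mem_tail hap
    have haq' : a ∈ q.support := by
      have := List.mem_of_mem_tail haq
      rwa [Walk.support_reverse, List.mem_reverse] at this
    rcases hdisj a hap' haq' with rfl | rfl
    · have := hp.support_nodup
      rw [p.support_eq_cons, List.nodup_cons] at this
      exact this.1 hap
    · have := hqrev.support_nodup
      rw [q.reverse.support_eq_cons, List.nodup_cons] at this
      exact this.1 haq
  have hwnil : w ≠ Walk.nil := by
    intro h
    have := congrArg Walk.length h
    rw [hlenw] at this
    simp only [Walk.length_nil] at this
    omega
  have hwcyc : w.IsCycle := ⟨⟨hwtrail, hwnil⟩, hwnodup⟩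
  have hclique := hch x w hwcyc
  have hxmem : x ∈ {a | a ∈ w.support} := w.start_mem_support
  have hymem : y ∈ {a | a ∈ w.support} := by
    show y ∈ w.support
    rw [hw, Walk.mem_support_append_iff]
    exact Or.inl p.end_mem_support
  exact hclique hxmem hymem hxy

private lemma exists_first_common {u y : V} (S : Set V) (q : G.Walk u y) (hy : y ∈ S) :
    ∃ (c : V) (t : G.Walk u c) (t' : G.Walk c y),
      t.append t' = q ∧ c ∈ S ∧ ∀ d ∈ t.support, d ∈ S → d = c := by
  induction q with
  | nil => exact ⟨_, Walk.nil, Walk.nil, rfl, hy, fun d hd _ => by simpa using hd⟩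
  | @cons u b _ h q ih =>
    by_cases hu : u ∈ S
    · exact ⟨u, Walk.nil, Walk.cons h q, rfl, hu, fun d hd _ => by simpa using hd⟩
    · obtain ⟨c, t, t', ht, hc, hfirst⟩ := ih hy
      refine ⟨c, Walk.cons h t, t', by rw [Walk.cons_append, ht], hc, ?_⟩
      intro d hd hdS
      rw [Walk.support_cons, List.mem_cons] at hd
      rcases hd with rfl | hd
      · exact absurd hdS hu
      · exact hfirst d hd hdS

private lemma start_not_mem_dropUntil_support {x y c : V} (p : G.Walk x y) (hp : p.IsPath)
    (hc : c ∈ p.support) (hne : x ≠ c) : x ∉ (p.dropUntil c hc).support := by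
  intro hx
  have hnodup := hp.support_nodup
  rw [← p.take_spec hc, Walk.support_append, List.nodup_append'] at hnodup
  have hxt : x ∈ (p.takeUntil c hc).support := Walk.start_mem_support _
  have hxd : x ∈ (p.dropUntil c hc).support.tail := by
    rw [(p.dropUntil c hc).support_eq_cons, List.mem_cons] at hx
    rcases hx with rfl | hx
    · exact absurd rfl hne
    · exact hx
  exact hnodup.2.2 hxt hxd

private lemma exists_walk_in_inter (hch : Chordful G) :
    ∀ (n : ℕ) {x y : V} (p q : G.Walk x y), p.IsPath → q.IsPath →
      p.length + q.length ≤ n →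
      ∃ r : G.Walk x y, ∀ a ∈ r.support, a ∈ p.support ∧ a ∈ q.support := by
  intro n
  induction n with
  | zero =>
    intro x y p q hp hq hlen
    have hx : x = y := q.eq_of_length_eq_zero (by omega)
    subst hx
    exact ⟨Walk.nil, fun a ha => by
      simp only [Walk.support_nil, List.mem_singleton] at ha
      subst ha
      exact ⟨p.start_mem_support, q.start_mem_support⟩⟩
  | succ n ih =>
    intro x y p q hp hq hlen
    by_cases hxy : x = y
    · subst hxy
      exact ⟨Walk.nil, fun a ha => by
        simp only [Walk.support_nil, List.mem_singleton] at ha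
        subst ha
        exact ⟨p.start_mem_support, q.start_mem_support⟩⟩
    cases q with
    | nil => exact absurd rfl hxy
    | @cons _ b _ h q' =>
      have hq' : q'.IsPath := hq.of_cons
      have hxq' : x ∉ q'.support := ((Walk.cons_isPath_iff h q').mp hq).2
      have hlenq : (Walk.cons h q').length = q'.length + 1 := by simp
      by_cases hb : b ∈ p.support
      · have hp₂ : (p.dropUntil b hb).IsPath := hp.dropUntil hb
        have hlen₂ : (p.takeUntil b hb).length + (p.dropUntil b hb).length = p.length := by
          have := congrArg Walk.length (p.take_spec hb)
          rwa [Walk.length_append] at this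
        obtain ⟨r', hr'⟩ := ih (p.dropUntil b hb) q' hp₂ hq'
          (by rw [hlenq] at hlen; omega)
        refine ⟨Walk.cons h r', fun a ha => ?_⟩
        rw [Walk.support_cons, List.mem_cons] at ha
        rcases ha with rfl | ha
        · exact ⟨p.start_mem_support, Walk.start_mem_support _⟩
        · obtain ⟨h1, h2⟩ := hr' a ha
          exact ⟨Walk.support_dropUntil_subset p hb h1,
            by rw [Walk.support_cons]; exact List.mem_cons_of_mem _ h2⟩
      · obtain ⟨c, t, t', ht, hcp, hfirst⟩ :=
          exists_first_common {a | a ∈ p.support} q' p.end_mem_support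
        have hqsplit : (t.append t').IsPath := by rw [ht]; exact hq'
        have htpath : t.IsPath := hqsplit.of_append_left
        have ht'path : t'.IsPath := hqsplit.of_append_right
        have htsub : ∀ a ∈ t.support, a ∈ q'.support := fun a ha => by
          rw [← ht, Walk.mem_support_append_iff]; exact Or.inl ha
        have ht'sub : ∀ a ∈ t'.support, a ∈ q'.support := fun a ha => by
          rw [← ht, Walk.mem_support_append_iff]; exact Or.inr ha
        have hxc : x ≠ c := fun hxc => hxq' (hxc ▸ htsub c t.end_mem_support)
        have hbc : b ≠ c := fun hbc => hb (hbc ▸ hcp)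
        have hq₁ : (Walk.cons h t).IsPath := by
          rw [Walk.cons_isPath_iff]
          exact ⟨htpath, fun hx => hxq' (htsub x hx)⟩
        have hadj : G.Adj x c := by
          refine adj_of_two_disjoint_paths hch hxc (p.takeUntil c hcp) (Walk.cons h t)
            (hp.takeUntil hcp) hq₁ ?_
          intro a hap haq
          rw [Walk.support_cons, List.mem_cons] at haq
          rcases haq with rfl | haq
          · exact Or.inl rfl
          · exact Or.inr (hfirst a haq (Walk.support_takeUntil_subset p hcp hap))
        have hxd : x ∉ (p.dropUntil c hcp).support :=
          start_not_mem_dropUntil_support p hp hcp hxc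
        have hxt' : x ∉ t'.support := fun hx => hxq' (ht'sub x hx)
        have hp'' : (Walk.cons hadj (p.dropUntil c hcp)).IsPath := by
          rw [Walk.cons_isPath_iff]; exact ⟨hp.dropUntil hcp, hxd⟩
        have hq'' : (Walk.cons hadj t').IsPath := by
          rw [Walk.cons_isPath_iff]; exact ⟨ht'path, hxt'⟩
        have hlenp : (p.takeUntil c hcp).length + (p.dropUntil c hcp).length = p.length := by
          have := congrArg Walk.length (p.take_spec hcp)
          rwa [Walk.length_append] at this
        have htake1 : (p.takeUntil c hcp).length ≠ 0 :=
          fun h0 => hxc ((p.takeUntil c hcp).eq_of_length_eq_zero h0)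
        have hlent : t.length + t'.length = q'.length := by
          have := congrArg Walk.length ht
          rwa [Walk.length_append] at this
        have htlen1 : t.length ≠ 0 := fun h0 => hbc (t.eq_of_length_eq_zero h0)
        obtain ⟨r, hr⟩ := ih (Walk.cons hadj (p.dropUntil c hcp)) (Walk.cons hadj t')
          hp'' hq'' (by rw [hlenq] at hlen; simp only [Walk.length_cons]; omega)
        refine ⟨r, fun a ha => ?_⟩
        obtain ⟨h1, h2⟩ := hr a ha
        rw [Walk.support_cons, List.mem_cons] at h1 h2
        constructor
        · rcases h1 with rfl | h1
          · exact p.start_mem_support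
          · exact Walk.support_dropUntil_subset p hcp h1
        · rw [Walk.support_cons, List.mem_cons]
          rcases h2 with rfl | h2
          · exact Or.inl rfl
          · exact Or.inr (ht'sub a h2)

private lemma reachable_induce_of_support {s : Set V} :
    ∀ {u w : V} (r : G.Walk u w) (hr : ∀ a ∈ r.support, a ∈ s),
      (G.induce s).Reachable ⟨u, hr u r.start_mem_support⟩ ⟨w, hr w r.end_mem_support⟩ := by
  intro u w r
  induction r with
  | nil => exact fun hr => Reachable.refl _
  | @cons u b _ h r ih =>
    intro hr
    have hbs : b ∈ s := hr b
      (by rw [Walk.support_cons]; exact List.mem_cons_of_mem _ r.start_mem_support)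
    have h1 : (G.induce s).Adj ⟨u, hr u (Walk.start_mem_support _)⟩ ⟨b, hbs⟩ := by
      simp only [SimpleGraph.comap_adj, Function.Embedding.coe_subtype]
      exact h
    exact h1.reachable.trans
      (ih fun a ha => hr a (by rw [Walk.support_cons]; exact List.mem_cons_of_mem _ ha))

private lemma adj_of_connected_pair {x y : V} (hxy : x ≠ y)
    (h : (G.induce ({x, y} : Set V)).Connected) : G.Adj x y := by
  have hx : x ∈ ({x, y} : Set V) := Or.inl rfl
  have hy' : y ∈ ({x, y} : Set V) := Or.inr rfl
  obtain ⟨w⟩ := h.preconnected ⟨x, hx⟩ ⟨y, hy'⟩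
  have key : ∀ (a b : ({x, y} : Set V)) (w : (G.induce ({x, y} : Set V)).Walk a b),
      (a : V) ≠ (b : V) → G.Adj a b := by
    intro a b w
    cases w with
    | nil => exact fun hne => absurd rfl hne
    | @cons _ m _ hadj w' =>
      intro hne
      have hG : G.Adj (a : V) (m : V) := by
        simpa only [SimpleGraph.comap_adj, Function.Embedding.coe_subtype] using hadj
      have hmb : (m : V) = (b : V) := by
        have ham := hG.ne
        have h1 := a.2
        have h2 := b.2
        have h3 := m.2
        simp only [Set.mem_insert_iff, Set.mem_singleton_iff] at h1 h2 h3
        rcases h1 with h1 | h1 <;> rcases h2 with h2 | h2 <;> rcases h3 with h3 | h3 <;>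
          simp_all
      rw [← hmb]
      exact hG
  exact key _ _ w hxy

private lemma mem_tail_support_of_closed {v y : V} (c : G.Walk v v) (hc : c ≠ Walk.nil)
    (hy : y ∈ c.support) : y ∈ c.support.tail := by
  cases c with
  | nil => exact absurd rfl hc
  | cons h c₂ =>
    rw [Walk.support_cons, List.tail_cons]
    rw [Walk.support_cons, List.mem_cons] at hy
    rcases hy with rfl | hy
    · exact c₂.end_mem_support
    · exact hy

end Helpers

/-- A finite connected simple graph is chordful if and only if its graphical
building set is closed under (nonempty) intersection. -/
theorem chordful_iff_building_closed_under_intersection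
    {V : Type*} [Fintype V] [DecidableEq V] (G : SimpleGraph V)
    (hG : G.Connected) :
    Chordful G ↔
      ∀ B ∈ graphBuilding G, ∀ B' ∈ graphBuilding G,
        (B ∩ B').Nonempty → B ∩ B' ∈ graphBuilding G := by
  constructor
  · intro hch B hB B' hB' hne
    refine ⟨hne, ?_⟩
    rw [SimpleGraph.connected_iff]
    obtain ⟨z, hz⟩ := hne
    refine ⟨?_, ⟨⟨z, Finset.mem_coe.mpr hz⟩⟩⟩
    rintro ⟨u, hu⟩ ⟨w, hw⟩
    have hu' : u ∈ B ∩ B' := Finset.mem_coe.mp hu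
    have hw' : w ∈ B ∩ B' := Finset.mem_coe.mp hw
    rw [Finset.mem_inter] at hu' hw'
    obtain ⟨wB⟩ := hB.2.preconnected ⟨u, Finset.mem_coe.mpr hu'.1⟩ ⟨w, Finset.mem_coe.mpr hw'.1⟩
    obtain ⟨wB'⟩ := hB'.2.preconnected ⟨u, Finset.mem_coe.mpr hu'.2⟩ ⟨w, Finset.mem_coe.mpr hw'.2⟩
    let p0 : G.Walk u w := wB.map (SimpleGraph.Embedding.induce (↑B : Set V)).toHom
    let q0 : G.Walk u w := wB'.map (SimpleGraph.Embedding.induce (↑B' : Set V)).toHom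
    have hp0 : ∀ a ∈ p0.support, a ∈ B := by
      intro a ha
      rw [show p0.support = _ from Walk.support_map _ wB, List.mem_map] at ha
      obtain ⟨b, -, rfl⟩ := ha
      exact b.2
    have hq0 : ∀ a ∈ q0.support, a ∈ B' := by
      intro a ha
      rw [show q0.support = _ from Walk.support_map _ wB', List.mem_map] at ha
      obtain ⟨b, -, rfl⟩ := ha
      exact b.2
    obtain ⟨r, hr⟩ := exists_walk_in_inter hch (p0.bypass.length + q0.bypass.length)
      p0.bypass q0.bypass p0.bypass_isPath q0.bypass_isPath le_rfl
    have hrs : ∀ a ∈ r.support, a ∈ (↑(B ∩ B') : Set V) := by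
      intro a ha
      obtain ⟨h1, h2⟩ := hr a ha
      have := hp0 a (p0.support_bypass_subset h1)
      have := hq0 a (q0.support_bypass_subset h2)
      simp only [Finset.coe_inter, Set.mem_inter_iff, Finset.mem_coe]
      exact ⟨‹a ∈ B›, ‹a ∈ B'›⟩
    exact reachable_induce_of_support r hrs
  · intro hclosed v c hcyc
    rw [SimpleGraph.isClique_iff]
    intro x hx y hy hxy
    have hx' : x ∈ c.support := hx
    have hy' : y ∈ c.support := hy
    have hc' : (c.rotate x hx').IsCycle := hcyc.rotate hx'
    have hytail : y ∈ c.support.tail := mem_tail_support_of_closed c hcyc.ne_nil hy'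
    have hyc' : y ∈ (c.rotate x hx').support := by
      have hrot := Walk.support_rotate c x hx'
      exact List.mem_of_mem_tail (hrot.mem_iff.mpr hytail)
    set t := (c.rotate x hx').takeUntil y hyc' with htdef
    set d := (c.rotate x hx').dropUntil y hyc' with hddef
    have hspec : t.append d = c.rotate x hx' := (c.rotate x hx').take_spec hyc'
    have htailp : (c.rotate x hx').support.tail = t.support.tail ++ d.support.tail := by
      rw [← hspec, Walk.support_append, t.support_eq_cons]; simp
    have hnodup := hc'.support_nodup
    rw [htailp, List.nodup_append'] at hnodup
    have hBmem : t.support.toFinset ∈ graphBuilding G := by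
      refine ⟨⟨x, ?_⟩, ?_⟩
      · rw [List.mem_toFinset]; exact t.start_mem_support
      · rw [List.coe_toFinset]; exact t.connected_induce_support
    have hB'mem : d.support.toFinset ∈ graphBuilding G := by
      refine ⟨⟨y, ?_⟩, ?_⟩
      · rw [List.mem_toFinset]; exact d.start_mem_support
      · rw [List.coe_toFinset]; exact d.connected_induce_support
    have hinter : t.support.toFinset ∩ d.support.toFinset = {x, y} := by
      ext a
      simp only [Finset.mem_inter, List.mem_toFinset, Finset.mem_insert, Finset.mem_singleton]
      constructor
      · rintro ⟨hat, had⟩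
        by_contra hcon
        push_neg at hcon
        obtain ⟨hax, hay⟩ := hcon
        have h1 : a ∈ t.support.tail := by
          rw [t.support_eq_cons, List.mem_cons] at hat
          exact hat.resolve_left hax
        have h2 : a ∈ d.support.tail := by
          rw [d.support_eq_cons, List.mem_cons] at had
          exact had.resolve_left hay
        exact hnodup.2.2 h1 h2
      · rintro (rfl | rfl)
        · exact ⟨t.start_mem_support, d.end_mem_support⟩
        · exact ⟨t.end_mem_support, d.start_mem_support⟩
    have hres := hclosed _ hBmem _ hB'mem (by rw [hinter]; exact ⟨x, by simp⟩)
    rw [hinter] at hres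
    have hconn : (G.induce ({x, y} : Set V)).Connected := by
      have h2 := hres.2
      rw [Finset.coe_insert, Finset.coe_singleton] at h2
      exact h2
    exact adj_of_connected_pair hxy hconn
end

section
/- Let G be a finite connected simple graph with vertex set S and let 𝓝 be a subset of 𝓑(G) \ {S}. Then 𝓝 is a 𝓑(G)-nested set if and only if for all N, N' ∈ 𝓝, either N ⊆ N', or N' ⊆ N, or N ∪ N' ∉ 𝓑(G). In particular, the nested complex of a graphical building set is a clique (flag) complex. -/
/-- `𝓝` is a `𝓑`-nested set: a subset of `𝓑 \ {ground set}` such that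
(N1) any two elements are nested or disjoint, and (N2) the union of any `k ≥ 2`
pairwise disjoint elements is not in `𝓑`. -/
def IsNested {V : Type*} [Fintype V] [DecidableEq V]
    (𝓑 𝓝 : Set (Finset V)) : Prop :=
  𝓝 ⊆ 𝓑 \ {Finset.univ} ∧
  (∀ N ∈ 𝓝, ∀ N' ∈ 𝓝, N ⊆ N' ∨ N' ⊆ N ∨ N ∩ N' = ∅) ∧
  (∀ F : Finset (Finset V), ↑F ⊆ 𝓝 → 2 ≤ F.card →
    (∀ N ∈ F, ∀ N' ∈ F, N ≠ N' → N ∩ N' = ∅) → F.biUnion id ∉ 𝓑)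

/-- In an induced connected graph covered by a family of sets, a walk from a vertex in a
piece `N` to a vertex outside `N` yields a cross edge between two distinct pieces. -/
lemma cross_edge_aux {V : Type*} [DecidableEq V] (G : SimpleGraph V)
    (F : Finset (Finset V)) :
    ∀ {a b : (↑(F.biUnion id) : Set V)}, (G.induce (↑(F.biUnion id) : Set V)).Walk a b →
      ∀ N ∈ F, (a : V) ∈ N → (b : V) ∉ N →
      ∃ N' ∈ F, ∃ u v : V, N ≠ N' ∧ u ∈ N ∧ v ∈ N' ∧ G.Adj u v := by
  intro a b w
  induction w with
  | nil => intro N hN ha hb; exact absurd ha hb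
  | @cons x y z hxy p ih =>
    intro N hN ha hb
    have hyU : (y : V) ∈ F.biUnion id := by exact_mod_cast y.2
    obtain ⟨N'', hN'', hy⟩ := Finset.mem_biUnion.mp hyU
    by_cases hyN : (y : V) ∈ N
    · exact ih N hN hyN hb
    · refine ⟨N'', hN'', x, y, ?_, ha, hy, hxy⟩
      rintro rfl; exact hyN hy

/-- If two sets each induce a connected subgraph and there is an edge between them,
then their union is in the graphical building set. -/
lemma union_mem_graphBuilding {V : Type*} [DecidableEq V] {G : SimpleGraph V}
    {N N' : Finset V} (hN : N ∈ graphBuilding G) (hN' : N' ∈ graphBuilding G)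
    {u v : V} (hu : u ∈ N) (hv : v ∈ N') (huv : G.Adj u v) :
    N ∪ N' ∈ graphBuilding G := by
  refine ⟨⟨u, Finset.mem_union_left _ hu⟩, ?_⟩
  rw [Finset.coe_union]
  exact SimpleGraph.connected_induce_union hN.2.preconnected hN'.2.preconnected
    (by exact_mod_cast hu) (by exact_mod_cast hv) huv

/-- For a graphical building set, a subset `𝓝 ⊆ 𝓑(G) \ {S}` is nested if and
only if any two of its elements `N, N'` satisfy `N ⊆ N'`, `N' ⊆ N`, or
`N ∪ N' ∉ 𝓑(G)`; in particular the nested complex of a graphical building set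
is a clique (flag) complex. -/
theorem isNested_graphBuilding_iff
    {V : Type*} [Fintype V] [DecidableEq V] (G : SimpleGraph V)
    (hG : G.Connected) (𝓝 : Set (Finset V))
    (h𝓝 : 𝓝 ⊆ graphBuilding G \ {Finset.univ}) :
    IsNested (graphBuilding G) 𝓝 ↔
      ∀ N ∈ 𝓝, ∀ N' ∈ 𝓝, N ⊆ N' ∨ N' ⊆ N ∨ N ∪ N' ∉ graphBuilding G := by
  constructor
  · rintro ⟨-, h1, h2⟩ N hN N' hN'
    rcases h1 N hN N' hN' with h | h | h
    · exact Or.inl h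
    · exact Or.inr (Or.inl h)
    · by_cases hEq : N = N'
      · exact Or.inl (le_of_eq hEq)
      refine Or.inr (Or.inr ?_)
      have := h2 {N, N'} (by
          intro x hx
          simp only [Finset.coe_insert, Finset.coe_singleton, Set.mem_insert_iff,
            Set.mem_singleton_iff] at hx
          rcases hx with rfl | rfl <;> assumption)
        (by rw [Finset.card_insert_of_notMem (by simpa using hEq), Finset.card_singleton])
        (by
          intro A hA B hB hAB
          simp only [Finset.mem_insert, Finset.mem_singleton] at hA hB
          rcases hA with rfl | rfl <;> rcases hB with rfl | rfl
          · exact absurd rfl hAB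
          · exact h
          · rw [Finset.inter_comm]; exact h
          · exact absurd rfl hAB)
      simpa [Finset.biUnion_insert] using this
  · intro h
    refine ⟨h𝓝, ?_, ?_⟩
    · intro N hN N' hN'
      rcases h N hN N' hN' with hh | hh | hh
      · exact Or.inl hh
      · exact Or.inr (Or.inl hh)
      · refine Or.inr (Or.inr ?_)
        by_contra hne
        obtain ⟨x, hx⟩ := Finset.nonempty_iff_ne_empty.mpr hne
        simp only [Finset.mem_inter] at hx
        apply hh
        refine ⟨⟨x, Finset.mem_union_left _ hx.1⟩, ?_⟩
        rw [Finset.coe_union]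
        exact SimpleGraph.induce_union_connected ((h𝓝 hN).1).2.preconnected ((h𝓝 hN').1).2.preconnected
          ⟨x, by exact_mod_cast hx.1, by exact_mod_cast hx.2⟩
    · intro F hF hcard hdisj hU
      obtain ⟨N₁, hN₁, N₂, hN₂, hne⟩ := Finset.one_lt_card.mp hcard
      obtain ⟨x, hx⟩ := ((h𝓝 (hF hN₁)).1).1
      obtain ⟨y, hy⟩ := ((h𝓝 (hF hN₂)).1).1
      have hxU : x ∈ F.biUnion id := Finset.mem_biUnion.mpr ⟨N₁, hN₁, hx⟩
      have hyU : y ∈ F.biUnion id := Finset.mem_biUnion.mpr ⟨N₂, hN₂, hy⟩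
      have hyN₁ : y ∉ N₁ := by
        intro hyN₁
        have := hdisj N₁ hN₁ N₂ hN₂ hne
        have : y ∈ N₁ ∩ N₂ := Finset.mem_inter.mpr ⟨hyN₁, hy⟩
        simp_all
      have hreach := hU.2.preconnected
        ⟨x, by exact_mod_cast hxU⟩ ⟨y, by exact_mod_cast hyU⟩
      obtain ⟨w⟩ := hreach
      obtain ⟨N', hN', u, v, hNN', hu, hv, huv⟩ :=
        cross_edge_aux G F w N₁ hN₁ hx hyN₁
      have hdisjNN' := hdisj N₁ hN₁ N' hN' hNN'
      have hmem : N₁ ∪ N' ∈ graphBuilding G :=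
        union_mem_graphBuilding (h𝓝 (hF hN₁)).1 (h𝓝 (hF hN')).1 hu hv huv
      rcases h N₁ (hF hN₁) N' (hF hN') with hh | hh | hh
      · have : u ∈ N₁ ∩ N' := Finset.mem_inter.mpr ⟨hu, hh hu⟩
        simp_all
      · have : v ∈ N₁ ∩ N' := Finset.mem_inter.mpr ⟨hh hv, hv⟩
        simp_all
      · exact hh hmem
end

section
/- Let S be a finite set and let 𝓘 be a nonempty finite family of nonempty subsets of S such that ⋂_{I ∈ 𝓘} I ≠ ∅. In ℝ^S with canonical basis (e_s)_{s ∈ S}, let Δ_I = conv{e_i : i ∈ I} denote the face of the standard simplex corresponding to I. Then the dimension of the Minkowski sum Σ_{I ∈ 𝓘} Δ_I equals |⋃_{I ∈ 𝓘} I| − 1, where dimension means the rank (finrank) of the vector span of all differences of points of the set. -/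
open Pointwise

/-- The face `Δ_T = conv{e_t : t ∈ T}` of the standard simplex in `ℝ^α`
corresponding to a subset `T`. -/
noncomputable def simplexFace (α : Type*) [DecidableEq α] (T : Finset α) :
    Set (α → ℝ) :=
  convexHull ℝ {x : α → ℝ | ∃ t ∈ T, x = Pi.single t 1}

/-- The vector span of a Minkowski sum of two nonempty sets is the join of the
vector spans. -/
lemma vectorSpan_set_add {V : Type*} [AddCommGroup V] [Module ℝ V]
    {A B : Set V} (hA : A.Nonempty) (hB : B.Nonempty) :
    vectorSpan ℝ (A + B) = vectorSpan ℝ A ⊔ vectorSpan ℝ B := by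
  obtain ⟨a0, ha0⟩ := hA
  obtain ⟨b0, hb0⟩ := hB
  apply le_antisymm
  · rw [vectorSpan_def, Submodule.span_le]
    rintro x ⟨u, hu, v, hv, rfl⟩
    obtain ⟨a, ha, b, hb, rfl⟩ := hu
    obtain ⟨a', ha', b', hb', rfl⟩ := hv
    have h : (a + b) -ᵥ (a' + b') = (a -ᵥ a') + (b -ᵥ b') := by
      simp only [vsub_eq_sub]; abel
    show (a + b) -ᵥ (a' + b') ∈ (vectorSpan ℝ A ⊔ vectorSpan ℝ B : Submodule ℝ V)
    rw [h]
    exact Submodule.add_mem _ (Submodule.mem_sup_left (vsub_mem_vectorSpan ℝ ha ha'))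
      (Submodule.mem_sup_right (vsub_mem_vectorSpan ℝ hb hb'))
  · apply sup_le
    · rw [vectorSpan_def, Submodule.span_le]
      rintro x ⟨a, ha, a', ha', rfl⟩
      have h : a -ᵥ a' = (a + b0) -ᵥ (a' + b0) := by simp [vsub_eq_sub]
      show a -ᵥ a' ∈ (vectorSpan ℝ (A + B) : Submodule ℝ V)
      rw [h]
      exact vsub_mem_vectorSpan ℝ (Set.add_mem_add ha hb0) (Set.add_mem_add ha' hb0)
    · rw [vectorSpan_def, Submodule.span_le]
      rintro x ⟨b, hb, b', hb', rfl⟩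
      have h : b -ᵥ b' = (a0 + b) -ᵥ (a0 + b') := by simp [vsub_eq_sub]
      show b -ᵥ b' ∈ (vectorSpan ℝ (A + B) : Submodule ℝ V)
      rw [h]
      exact vsub_mem_vectorSpan ℝ (Set.add_mem_add ha0 hb) (Set.add_mem_add ha0 hb')

lemma sum_sets_nonempty {V : Type*} [AddCommGroup V] {ι : Type*} {s : Finset ι}
    (hs : s.Nonempty) {f : ι → Set V} (hf : ∀ i ∈ s, (f i).Nonempty) :
    (∑ i ∈ s, f i).Nonempty := by
  induction hs using Finset.Nonempty.cons_induction with
  | singleton a => simpa using hf a (by simp)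
  | cons a s h hs ih =>
    rw [Finset.sum_cons]
    exact (hf a (by simp)).add (ih fun i hi => hf i (by simp [hi]))

/-- The vector span of a finite Minkowski sum of nonempty sets is the join of the
vector spans. -/
lemma vectorSpan_finset_sum {V : Type*} [AddCommGroup V] [Module ℝ V] {ι : Type*}
    {s : Finset ι} (hs : s.Nonempty) {f : ι → Set V} (hf : ∀ i ∈ s, (f i).Nonempty) :
    vectorSpan ℝ (∑ i ∈ s, f i) = ⨆ i ∈ s, vectorSpan ℝ (f i) := by
  induction hs using Finset.Nonempty.cons_induction with
  | singleton a => simp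
  | cons a s h hs ih =>
    rw [Finset.sum_cons,
      vectorSpan_set_add (hf a (by simp)) (sum_sets_nonempty hs fun i hi => hf i (by simp [hi])),
      ih (fun i hi => hf i (by simp [hi]))]
    simp [Finset.mem_cons, iSup_or, iSup_sup_eq, iSup_iSup_eq_left]

/-- The span of the translated vertices of a face of the standard simplex has
rank `|U| - 1`. -/
lemma finrank_span_translated_vertices (α : Type*) [Fintype α] [DecidableEq α]
    (U : Finset α) (a : α) (haU : a ∈ U) :
    Module.finrank ℝ (Submodule.span ℝ
      ((fun x => x - Pi.single a 1) '' {x : α → ℝ | ∃ t ∈ U, x = Pi.single t 1}))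
      = U.card - 1 := by
  classical
  set T := U.erase a with hT
  set b : ↥T → (α → ℝ) := fun i => Pi.single i.val 1 - Pi.single a 1 with hb
  have hset : (fun x => x - Pi.single a 1) '' {x : α → ℝ | ∃ t ∈ U, x = Pi.single t 1}
      = insert 0 (Set.range b) := by
    ext x
    simp only [Set.mem_image, Set.mem_setOf_eq, Set.mem_insert_iff, Set.mem_range, hb]
    constructor
    · rintro ⟨_, ⟨t, ht, rfl⟩, rfl⟩
      by_cases hta : t = a
      · subst hta; left; simp
      · right; exact ⟨⟨t, Finset.mem_erase.2 ⟨hta, ht⟩⟩, rfl⟩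
    · rintro (rfl | ⟨⟨t, ht⟩, rfl⟩)
      · exact ⟨Pi.single a 1, ⟨a, haU, rfl⟩, by simp⟩
      · exact ⟨Pi.single t 1, ⟨t, Finset.mem_of_mem_erase ht, rfl⟩, rfl⟩
  rw [hset, Submodule.span_insert_zero]
  have hli : LinearIndependent ℝ b := by
    have hg : ∀ i : ↥T, i.val ≠ a := fun i => Finset.ne_of_mem_erase i.2
    set g : ↥T → {x : α // x ≠ a} := fun i => ⟨i.val, hg i⟩ with hgdef
    have hginj : Function.Injective g := fun i j hij =>
      Subtype.ext (congrArg (Subtype.val : {x : α // x ≠ a} → α) hij)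
    have hbasis : LinearIndependent ℝ (fun j : {x : α // x ≠ a} => Pi.single j (1 : ℝ)) := by
      have h := (Pi.basisFun ℝ {x : α // x ≠ a}).linearIndependent
      have he : ⇑(Pi.basisFun ℝ {x : α // x ≠ a}) = fun j => Pi.single j (1 : ℝ) := by
        funext j; simp [Pi.basisFun_apply]
      rwa [he] at h
    have hcomp : (LinearMap.funLeft ℝ ℝ (Subtype.val : {x : α // x ≠ a} → α)) ∘ b
        = (fun j : {x : α // x ≠ a} => Pi.single j (1 : ℝ)) ∘ g := by
      funext i
      funext j
      simp [LinearMap.funLeft, hb, Pi.single_apply, Subtype.ext_iff, j.2, hgdef]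
    exact LinearIndependent.of_comp (LinearMap.funLeft ℝ ℝ Subtype.val)
      (hcomp ▸ hbasis.comp g hginj)
  rw [finrank_span_eq_card hli, Fintype.card_coe, hT, Finset.card_erase_of_mem haU]

/-- If `𝓘` is a nonempty finite family of nonempty subsets of a finite set `α`
with nonempty intersection, then the dimension of the Minkowski sum
`Σ_{I ∈ 𝓘} Δ_I` of the corresponding faces of the standard simplex equals
`|⋃ 𝓘| - 1`, where dimension means the rank of the vector span of all
differences of points. -/
theorem finrank_minkowski_sum_simplexFaces (α : Type*) [Fintype α] [DecidableEq α]
    (𝓘 : Finset (Finset α)) (h𝓘 : 𝓘.Nonempty) (hne : ∀ I ∈ 𝓘, I.Nonempty)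
    (hint : ∃ a : α, ∀ I ∈ 𝓘, a ∈ I) :
    Module.finrank ℝ (vectorSpan ℝ (∑ I ∈ 𝓘, simplexFace α I)) =
      (𝓘.biUnion id).card - 1 := by
  obtain ⟨a, ha⟩ := hint
  obtain ⟨I0, hI0⟩ := h𝓘
  have haU : a ∈ 𝓘.biUnion id := Finset.mem_biUnion.2 ⟨I0, hI0, ha I0 hI0⟩
  have hnonempty : ∀ I ∈ 𝓘, (simplexFace α I).Nonempty := fun I hI =>
    ⟨Pi.single a 1, subset_convexHull ℝ _ ⟨a, ha I hI, rfl⟩⟩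
  have key : vectorSpan ℝ (∑ I ∈ 𝓘, simplexFace α I)
      = Submodule.span ℝ ((fun x => x - Pi.single a 1) ''
          {x : α → ℝ | ∃ t ∈ 𝓘.biUnion id, x = Pi.single t 1}) := by
    rw [vectorSpan_finset_sum ⟨I0, hI0⟩ hnonempty]
    have hvs : ∀ I ∈ 𝓘, vectorSpan ℝ (simplexFace α I)
        = Submodule.span ℝ ((fun x => x - Pi.single a 1) ''
            {x : α → ℝ | ∃ t ∈ I, x = Pi.single t 1}) := by
      intro I hI
      rw [simplexFace, ← direction_affineSpan, affineSpan_convexHull, direction_affineSpan,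
        vectorSpan_eq_span_vsub_set_right ℝ
          (show (Pi.single a 1 : α → ℝ) ∈ {x : α → ℝ | ∃ t ∈ I, x = Pi.single t 1} from
            ⟨a, ha I hI, rfl⟩)]
      simp only [vsub_eq_sub]
    rw [biSup_congr hvs, ← Submodule.span_iUnion₂]
    congr 1
    ext x
    simp only [Set.mem_iUnion, Set.mem_image, Set.mem_setOf_eq, Finset.mem_biUnion, id]
    constructor
    · rintro ⟨I, hI, y, ⟨t, ht, rfl⟩, rfl⟩
      exact ⟨Pi.single t 1, ⟨t, ⟨I, hI, ht⟩, rfl⟩, rfl⟩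
    · rintro ⟨y, ⟨t, ⟨I, hI, ht⟩, rfl⟩, rfl⟩
      exact ⟨I, hI, Pi.single t 1, ⟨t, ht, rfl⟩, rfl⟩
  rw [key, finrank_span_translated_vertices α (𝓘.biUnion id) a haU]
end

section
/- Let 𝓑 be a connected building set on a finite ground set S that is closed under intersection. Then the set Π(𝓑) of all 𝓑-paths is a generating subset of 𝓑: for every B ∈ 𝓑 and every b ∈ B, B is the union of the 𝓑-paths P ∈ Π(𝓑) with b ∈ P ⊆ B. -/
/-- `𝓑` is a building set on the finite ground set `V`: a collection of
nonempty subsets of `V` such that (B1) the union of two intersecting elements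
is again an element, and (B2) all singletons are elements. -/
def IsBuilding {V : Type*} [DecidableEq V] (𝓑 : Set (Finset V)) : Prop :=
  (∀ B ∈ 𝓑, B.Nonempty) ∧
  (∀ B ∈ 𝓑, ∀ B' ∈ 𝓑, (B ∩ B').Nonempty → B ∪ B' ∈ 𝓑) ∧
  (∀ s : V, ({s} : Finset V) ∈ 𝓑)

/-- `P` is the `𝓑`-path `π(s,t)`: the inclusion-smallest element of `𝓑`
containing both `s` and `t`. -/
def IsMinPath {V : Type*} (𝓑 : Set (Finset V)) (s t : V) (P : Finset V) : Prop :=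
  P ∈ 𝓑 ∧ s ∈ P ∧ t ∈ P ∧ ∀ B ∈ 𝓑, s ∈ B → t ∈ B → P ⊆ B

/-- `P` is a `𝓑`-path, i.e. an element of `Π(𝓑)`. -/
def IsBPath {V : Type*} (𝓑 : Set (Finset V)) (P : Finset V) : Prop :=
  ∃ s t : V, IsMinPath 𝓑 s t P

/-- `𝓒` is a generating subset of `𝓑`: for every `B ∈ 𝓑` and `b ∈ B`, the set
`B` is the union of the elements `C ∈ 𝓒` with `b ∈ C ⊆ B`. -/
def IsGenerating {V : Type*} (𝓑 𝓒 : Set (Finset V)) : Prop :=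
  𝓒 ⊆ 𝓑 ∧ ∀ B ∈ 𝓑, ∀ b ∈ B,
    (B : Set V) = ⋃ C ∈ {C : Finset V | C ∈ 𝓒 ∧ b ∈ C ∧ C ⊆ B}, (C : Set V)


lemma exists_minPath {V : Type*} [Fintype V] [DecidableEq V]
    (𝓑 : Set (Finset V))
    (hconn : (Finset.univ : Finset V) ∈ 𝓑)
    (hclosed : ∀ B ∈ 𝓑, ∀ B' ∈ 𝓑, (B ∩ B').Nonempty → B ∩ B' ∈ 𝓑)
    (s t : V) : ∃ P, IsMinPath 𝓑 s t P := by
  classical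
  set F : Set (Finset V) := {B | B ∈ 𝓑 ∧ s ∈ B ∧ t ∈ B} with hF
  have hne : F.Nonempty := ⟨Finset.univ, hconn, Finset.mem_univ _, Finset.mem_univ _⟩
  obtain ⟨P, hP, hmin'⟩ := Set.Finite.exists_minimalFor Finset.card F (Set.toFinite F) hne
  have hmin : ∀ a' ∈ F, a'.card ≤ P.card → P.card = a'.card :=
    fun a' ha' h => le_antisymm (hmin' ha' h) h
  refine ⟨P, hP.1, hP.2.1, hP.2.2, ?_⟩
  intro B hB hsB htB
  have hinter : P ∩ B ∈ 𝓑 := hclosed P hP.1 B hB ⟨s, Finset.mem_inter.2 ⟨hP.2.1, hsB⟩⟩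
  have hmem : P ∩ B ∈ F := ⟨hinter, Finset.mem_inter.2 ⟨hP.2.1, hsB⟩,
    Finset.mem_inter.2 ⟨hP.2.2, htB⟩⟩
  have hle : (P ∩ B).card ≤ P.card := Finset.card_le_card Finset.inter_subset_left
  have hcard := hmin _ hmem hle
  have heq : P ∩ B = P := Finset.eq_of_subset_of_card_le Finset.inter_subset_left (le_of_eq hcard)
  intro x hx
  exact (Finset.mem_inter.1 (heq ▸ hx)).2

/-- For a connected building set `𝓑` closed under intersection, the set
`Π(𝓑)` of all `𝓑`-paths is a generating subset of `𝓑`. -/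
theorem bPaths_isGenerating {V : Type*} [Fintype V] [DecidableEq V]
    (𝓑 : Set (Finset V)) (hbuild : IsBuilding 𝓑)
    (hconn : (Finset.univ : Finset V) ∈ 𝓑)
    (hclosed : ∀ B ∈ 𝓑, ∀ B' ∈ 𝓑, (B ∩ B').Nonempty → B ∩ B' ∈ 𝓑) :
    IsGenerating 𝓑 {P : Finset V | IsBPath 𝓑 P} := by
  classical
  constructor
  · rintro P ⟨s, t, hP⟩
    exact hP.1
  · intro B hB b hb
    ext x
    simp only [Set.mem_iUnion, Set.mem_setOf_eq, Finset.coe_mem, Finset.mem_coe]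
    constructor
    · intro hx
      obtain ⟨P, hP⟩ := exists_minPath 𝓑 hconn hclosed b x
      exact ⟨P, ⟨⟨b, x, hP⟩, hP.2.1, hP.2.2.2 B hB hb hx⟩, hP.2.2.1⟩
    · rintro ⟨P, ⟨-, -, hPB⟩, hxP⟩
      exact hPB hxP
end

section
/- Let γ be a real number with γ > 2, let a, b, c be nonnegative integers, let k ≥ 0, and let d_1, …, d_k be positive integers. Then γ^{2 + a + b + c + d_1 + ⋯ + d_k} > γ^{1 + b + c} + γ^{1 + a + c} + Σ_{i=1}^k γ^{d_i}. -/
lemma gamma_step (γ : ℝ) (hγ : 2 < γ) (S : ℝ) (M d : ℕ) (hM : 1 ≤ M) (hd : 1 ≤ d)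
    (hS : S < γ ^ M) : S + γ ^ d < γ ^ (M + d) := by
  have h1 : (1:ℝ) ≤ γ := by linarith
  have hpos : (0:ℝ) < γ := by linarith
  have hMle : γ ^ M ≤ γ ^ (M + d - 1) := pow_le_pow_right₀ h1 (by omega)
  have hdle : γ ^ d ≤ γ ^ (M + d - 1) := pow_le_pow_right₀ h1 (by omega)
  have h2 : 2 * γ ^ (M + d - 1) < γ * γ ^ (M + d - 1) := by
    have := pow_pos hpos (M + d - 1)
    nlinarith
  have h3 : γ * γ ^ (M + d - 1) = γ ^ (M + d) := by
    rw [← pow_succ']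
    congr 1
    omega
  nlinarith

/-- For any real `γ > 2`, nonnegative integers `a, b, c` and positive integers
`d_1, …, d_k`, one has
`γ^{2+a+b+c+d_1+⋯+d_k} > γ^{1+b+c} + γ^{1+a+c} + Σ_i γ^{d_i}`. -/
theorem gamma_pow_inequality (γ : ℝ) (hγ : 2 < γ) (a b c : ℕ) (k : ℕ)
    (d : Fin k → ℕ) (hd : ∀ i, 0 < d i) :
    γ ^ (1 + b + c) + γ ^ (1 + a + c) + ∑ i, γ ^ (d i)
      < γ ^ (2 + a + b + c + ∑ i, d i) := by
  have h1 : (1:ℝ) ≤ γ := by linarith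
  have hpos : (0:ℝ) < γ := by linarith
  induction k with
  | zero =>
      simp only [Finset.univ_eq_empty, Finset.sum_empty, add_zero]
      have hb : γ ^ (1 + b + c) ≤ γ ^ (1 + a + b + c) := pow_le_pow_right₀ h1 (by omega)
      have ha : γ ^ (1 + a + c) ≤ γ ^ (1 + a + b + c) := pow_le_pow_right₀ h1 (by omega)
      have h2 : 2 * γ ^ (1 + a + b + c) < γ * γ ^ (1 + a + b + c) := by
        have := pow_pos hpos (1 + a + b + c)
        nlinarith
      have h3 : γ * γ ^ (1 + a + b + c) = γ ^ (2 + a + b + c) := by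
        rw [← pow_succ']
        congr 1
        omega
      linarith
  | succ n ih =>
      have key := ih (fun i => d i.succ) (fun i => hd i.succ)
      rw [Fin.sum_univ_succ (fun i => γ ^ (d i)), Fin.sum_univ_succ d]
      have := gamma_step γ hγ
        (γ ^ (1 + b + c) + γ ^ (1 + a + c) + ∑ i : Fin n, γ ^ (d i.succ))
        (2 + a + b + c + ∑ i : Fin n, d i.succ) (d 0) (by omega) (hd 0) key
      calc γ ^ (1 + b + c) + γ ^ (1 + a + c) + (γ ^ (d 0) + ∑ i : Fin n, γ ^ (d i.succ))
          = (γ ^ (1 + b + c) + γ ^ (1 + a + c) + ∑ i : Fin n, γ ^ (d i.succ)) + γ ^ (d 0) := by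
            ring
        _ < γ ^ (2 + a + b + c + ∑ i : Fin n, d i.succ + d 0) := this
        _ = γ ^ (2 + a + b + c + (d 0 + ∑ i : Fin n, d i.succ)) := by ring_nf
end

section
/- Let G be a finite connected chordful simple graph with vertex set S, and let s, t ∈ S. Then a subset P ⊆ S is the 𝓑(G)-path π(s,t) (the inclusion-smallest connected subset of G containing s and t) if and only if P is the vertex set of an induced path of G from s to t. In particular, the vertex set of any induced path between s and t is uniquely determined. -/
/-- `P` is the vertex set of an induced path of `G` from `s` to `t`: a path
such that the only edges of `G` between its vertices are the consecutive edges
of the path (a single vertex is the trivial induced path from `s` to `s`). -/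
def IsInducedPathSet {V : Type*} [DecidableEq V] (G : SimpleGraph V)
    (s t : V) (P : Finset V) : Prop :=
  ∃ p : G.Walk s t, p.IsPath ∧
    (∀ u v : V, u ∈ p.support → v ∈ p.support → G.Adj u v →
      Sym2.mk u v ∈ p.edges) ∧
    P = p.support.toFinset


open SimpleGraph

section Aux
variable {V : Type*} [DecidableEq V] {G : SimpleGraph V}

lemma exists_first_split (L : List V) {a b : V} (q : G.Walk a b) (hb : b ∈ L) :
    ∃ c, c ∈ L ∧ ∃ (q₁ : G.Walk a c) (q₂ : G.Walk c b),
      q = q₁.append q₂ ∧ ∀ x ∈ q₁.support, x ≠ c → x ∉ L := by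
  induction q with
  | nil =>
    exact ⟨_, hb, Walk.nil, Walk.nil, rfl, by
      intro x hx hxc; simp only [Walk.support_nil, List.mem_singleton] at hx; exact absurd hx hxc⟩
  | @cons a a' b h q' ih =>
    by_cases ha : a ∈ L
    · refine ⟨a, ha, Walk.nil, Walk.cons h q', by simp, ?_⟩
      intro x hx hxc; simp only [Walk.support_nil, List.mem_singleton] at hx
      exact absurd hx hxc
    · obtain ⟨c, hc, q₁, q₂, heq, hfirst⟩ := ih hb
      refine ⟨c, hc, Walk.cons h q₁, q₂, by rw [Walk.cons_append, ← heq], ?_⟩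
      intro x hx hxc
      rw [Walk.support_cons] at hx
      rcases List.mem_cons.mp hx with rfl | hx
      · exact ha
      · exact hfirst x hx hxc

lemma edge_of_length_one {u v : V} (z : G.Walk u v) (h : z.length = 1) :
    Sym2.mk u v ∈ z.edges := by
  cases z with
  | nil => simp at h
  | cons hadj z' =>
    cases z' with
    | nil => simp
    | cons h2 z2 => simp [Walk.length_cons] at h

set_option linter.unusedSectionVars false

lemma second_vertex_mem
    (hch : ∀ (v : V) (c : G.Walk v v), c.IsCycle → G.IsClique {x | x ∈ c.support})
    {s s₁ t : V} (h : G.Adj s s₁) (p' : G.Walk s₁ t)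
    (hp : (Walk.cons h p').IsPath)
    (hind : ∀ u v : V, u ∈ (Walk.cons h p').support → v ∈ (Walk.cons h p').support →
      G.Adj u v → Sym2.mk u v ∈ (Walk.cons h p').edges)
    (q : G.Walk s t) (hq : q.IsPath) : s₁ ∈ q.support := by
  by_contra hs₁
  rw [Walk.cons_isPath_iff] at hp
  obtain ⟨hp', hsp'⟩ := hp
  obtain ⟨c, hcL, q₁, q₂, heq, hfirst⟩ := exists_first_split p'.support q p'.end_mem_support
  have hq₁ : q₁.IsPath := by rw [heq] at hq; exact hq.of_append_left
  have hcq : c ∈ q.support := by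
    rw [heq, Walk.support_append]
    exact List.mem_append_left _ q₁.end_mem_support
  have hcs₁ : c ≠ s₁ := fun hh => hs₁ (hh ▸ hcq)
  have hcs : s ≠ c := fun hh => hsp' (hh ▸ hcL)
  set p₀ := p'.takeUntil c hcL with hp₀def
  have hp₀ : p₀.IsPath := hp'.takeUntil hcL
  have hp₀sub : ∀ x ∈ p₀.support, x ∈ p'.support := fun x hx =>
    Walk.support_takeUntil_subset _ _ hx
  -- the path w : s → s₁ through q₁ and p₀.reverse
  set w := q₁.append p₀.reverse with hwdef
  have hwpath : w.IsPath := by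
    rw [Walk.isPath_def, hwdef, Walk.support_append]
    rw [List.nodup_append]
    refine ⟨hq₁.support_nodup, (hp₀.reverse.support_nodup).tail, ?_⟩
    intro x hx y hx' hxy
    subst hxy
    have hxc : x ≠ c := by
      have hns : p₀.reverse.support = c :: p₀.reverse.support.tail :=
        p₀.reverse.support_eq_cons
      have : c ∉ p₀.reverse.support.tail := by
        have := hp₀.reverse.support_nodup
        rw [hns] at this
        exact (List.nodup_cons.mp this).1
      exact fun hh => this (hh ▸ hx')
    have hxp' : x ∈ p'.support := by
      apply hp₀sub
      have : x ∈ p₀.reverse.support := List.mem_of_mem_tail hx'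
      rwa [Walk.support_reverse, List.mem_reverse] at this
    exact hfirst x hx hxc hxp'
  have hedge : Sym2.mk s s₁ ∉ w.edges := by
    rw [hwdef, Walk.edges_append]
    intro hmem
    rcases List.mem_append.mp hmem with hmem | hmem
    · have : s₁ ∈ q.support := by
        apply Walk.snd_mem_support_of_mem_edges q
        rw [heq, Walk.edges_append]
        exact List.mem_append_left _ hmem
      exact hs₁ this
    · rw [Walk.edges_reverse, List.mem_reverse] at hmem
      exact hsp' (hp₀sub s (Walk.fst_mem_support_of_mem_edges _ hmem))
  -- the cycle
  have hedge' : Sym2.mk s s₁ ∉ w.reverse.edges := by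
    rwa [Walk.edges_reverse, List.mem_reverse]
  have hcyc : (Walk.cons h w.reverse).IsCycle := by
    refine Path.cons_isCycle ⟨w.reverse, hwpath.reverse⟩ h ?_
    exact hedge'
  have hclique := hch s _ hcyc
  have hsmem : s ∈ (Walk.cons h w.reverse).support := Walk.start_mem_support _
  have hcmem : c ∈ (Walk.cons h w.reverse).support := by
    rw [Walk.support_cons]
    refine List.mem_cons_of_mem _ ?_
    rw [Walk.support_reverse, List.mem_reverse, hwdef, Walk.support_append]
    exact List.mem_append_left _ q₁.end_mem_support
  have hAdj : G.Adj s c := hclique hsmem hcmem hcs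
  have := hind s c (Walk.start_mem_support _)
    (by rw [Walk.support_cons]; exact List.mem_cons_of_mem _ hcL) hAdj
  rw [Walk.edges_cons] at this
  rcases List.mem_cons.mp this with hh | hh
  · rcases Sym2.eq_iff.mp hh with ⟨-, rfl⟩ | ⟨rfl, rfl⟩
    · exact hcs₁ rfl
    · exact G.irrefl h
  · exact hsp' (Walk.fst_mem_support_of_mem_edges _ hh)

lemma induced_support_subset
    (hch : ∀ (v : V) (c : G.Walk v v), c.IsCycle → G.IsClique {x | x ∈ c.support})
    {s t : V} (p : G.Walk s t) (hp : p.IsPath)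
    (hind : ∀ u v : V, u ∈ p.support → v ∈ p.support → G.Adj u v →
      Sym2.mk u v ∈ p.edges)
    (q : G.Walk s t) : ∀ x ∈ p.support, x ∈ q.support := by
  induction p with
  | nil =>
    intro x hx
    simp only [Walk.support_nil, List.mem_singleton] at hx
    exact hx ▸ q.start_mem_support
  | @cons s s₁ t h p' ih =>
    intro x hx
    have hb : s₁ ∈ q.bypass.support :=
      second_vertex_mem hch h p' hp hind q.bypass q.bypass_isPath
    have hbq : s₁ ∈ q.support := q.support_bypass_subset hb
    rw [Walk.support_cons] at hx
    rcases List.mem_cons.mp hx with rfl | hx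
    · exact q.start_mem_support
    · rw [Walk.cons_isPath_iff] at hp
      have hind' : ∀ u v : V, u ∈ p'.support → v ∈ p'.support → G.Adj u v →
          Sym2.mk u v ∈ p'.edges := by
        intro u v hu hv hadj
        have := hind u v (by rw [Walk.support_cons]; exact List.mem_cons_of_mem _ hu)
          (by rw [Walk.support_cons]; exact List.mem_cons_of_mem _ hv) hadj
        rw [Walk.edges_cons] at this
        rcases List.mem_cons.mp this with hh | hh
        · rcases Sym2.eq_iff.mp hh with ⟨rfl, -⟩ | ⟨-, rfl⟩
          · exact absurd hu hp.2
          · exact absurd hv hp.2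
        · exact hh
      have := ih hp.1 hind' (q.dropUntil s₁ hbq) x hx
      exact Walk.support_dropUntil_subset q hbq this

lemma exists_induced_path (hG : G.Connected) (s t : V) :
    ∃ p : G.Walk s t, p.IsPath ∧ ∀ u v : V, u ∈ p.support → v ∈ p.support →
      G.Adj u v → Sym2.mk u v ∈ p.edges := by
  obtain ⟨q, hq⟩ := (hG s t).exists_walk_length_eq_dist
  have hlen : q.bypass.length = G.dist s t :=
    le_antisymm (hq ▸ q.length_bypass_le) (dist_le q.bypass)
  set p := q.bypass with hpdef
  refine ⟨p, q.bypass_isPath, ?_⟩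
  intro u v hu hv hadj
  by_contra hne
  have huv : u ≠ v := hadj.ne
  have seg2 : ∀ {a b : V} (z : G.Walk a b), a ≠ b → Sym2.mk a b ∉ p.edges →
      (∀ e ∈ z.edges, e ∈ p.edges) → 2 ≤ z.length := by
    intro a b z hab hzab hsub
    rcases Nat.lt_or_ge z.length 2 with hl | hl
    · interval_cases hz : z.length
      · exact absurd (z.eq_of_length_eq_zero hz) hab
      · exact absurd (hsub _ (edge_of_length_one z hz)) hzab
    · exact hl
  by_cases hu1 : u ∈ (p.takeUntil v hv).support
  · set w1 := p.takeUntil v hv with hw1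
    set seg := w1.dropUntil u hu1 with hseg
    have hseg2 : 2 ≤ seg.length := by
      refine seg2 seg huv hne ?_
      intro e he
      exact Walk.edges_takeUntil_subset p hv (Walk.edges_dropUntil_subset w1 hu1 he)
    have e1 : (w1.takeUntil u hu1).length + seg.length = w1.length := by
      conv_rhs => rw [← w1.take_spec hu1]
      rw [Walk.length_append]
    have e2 : w1.length + (p.dropUntil v hv).length = p.length := by
      conv_rhs => rw [← p.take_spec hv]
      rw [Walk.length_append]
    have hd := dist_le ((w1.takeUntil u hu1).append (Walk.cons hadj (p.dropUntil v hv)))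
    rw [Walk.length_append, Walk.length_cons, ← hlen] at hd
    omega
  · have hu2 : u ∈ (p.dropUntil v hv).support := by
      have : u ∈ p.support := hu
      rw [← p.take_spec hv, Walk.support_append, List.mem_append] at this
      rcases this with hh | hh
      · exact absurd hh hu1
      · exact List.mem_of_mem_tail hh
    set d := p.dropUntil v hv with hd'
    set seg := d.takeUntil u hu2 with hseg
    have hseg2 : 2 ≤ seg.length := by
      refine seg2 seg (Ne.symm huv) (by rwa [Sym2.eq_swap]) ?_
      intro e he
      exact Walk.edges_dropUntil_subset p hv (Walk.edges_takeUntil_subset d hu2 he)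
    have e1 : seg.length + (d.dropUntil u hu2).length = d.length := by
      conv_rhs => rw [← d.take_spec hu2]
      rw [Walk.length_append]
    have e2 : (p.takeUntil v hv).length + d.length = p.length := by
      conv_rhs => rw [← p.take_spec hv]
      rw [Walk.length_append]
    have hd := dist_le ((p.takeUntil v hv).append (Walk.cons hadj.symm (d.dropUntil u hu2)))
    rw [Walk.length_append, Walk.length_cons, ← hlen] at hd
    omega

end Aux


section Aux2
variable {V : Type*} [DecidableEq V] {G : SimpleGraph V}

lemma support_mem_building {s t : V} (p : G.Walk s t) :
    p.support.toFinset ∈ graphBuilding G := by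
  constructor
  · exact ⟨s, by simp⟩
  · have hset : ((p.support.toFinset : Finset V) : Set V) = {v | v ∈ p.support} := by
      ext x; simp
    rw [hset]
    exact p.connected_induce_support

lemma exists_walk_in {s t : V} (B : Finset V) (hB : B ∈ graphBuilding G)
    (hs : s ∈ B) (ht : t ∈ B) :
    ∃ q : G.Walk s t, ∀ x ∈ q.support, x ∈ B := by
  obtain ⟨-, hconn⟩ := hB
  have hr := hconn.preconnected ⟨s, hs⟩ ⟨t, ht⟩
  obtain ⟨w⟩ := hr
  refine ⟨w.map (SimpleGraph.Embedding.induce (B : Set V)).toHom, ?_⟩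
  intro x hx
  replace hx : x ∈ w.support.map (SimpleGraph.Embedding.induce (G := G) (B : Set V)).toHom := by
    rw [← Walk.support_map]; exact hx
  obtain ⟨y, hy, rfl⟩ := List.mem_map.mp hx
  exact y.2

end Aux2

/-- In a finite connected chordful graph `G`, a subset `P` of vertices is the
`𝓑(G)`-path `π(s,t)` if and only if `P` is the vertex set of an induced path
of `G` from `s` to `t`; in particular, the vertex set of an induced path
between `s` and `t` is uniquely determined. -/
theorem minPath_iff_inducedPathSet {V : Type*} [Fintype V] [DecidableEq V]
    (G : SimpleGraph V) (hG : G.Connected)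
    (hchordful : ∀ (v : V) (c : G.Walk v v), c.IsCycle →
      G.IsClique {x | x ∈ c.support})
    (s t : V) :
    (∀ P : Finset V,
      IsMinPath (graphBuilding G) s t P ↔ IsInducedPathSet G s t P) ∧
    (∀ P P' : Finset V,
      IsInducedPathSet G s t P → IsInducedPathSet G s t P' → P = P') := by
  have main1 : ∀ P : Finset V, IsInducedPathSet G s t P →
      IsMinPath (graphBuilding G) s t P := by
    rintro P ⟨p, hp, hind, rfl⟩
    refine ⟨support_mem_building p, by simp, by simp, ?_⟩
    intro B hB hsB htB x hx
    obtain ⟨q, hq⟩ := exists_walk_in B hB hsB htB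
    exact hq x (induced_support_subset hchordful p hp hind q x (List.mem_toFinset.mp hx))
  have huniqMin : ∀ P P' : Finset V, IsMinPath (graphBuilding G) s t P →
      IsMinPath (graphBuilding G) s t P' → P = P' := by
    rintro P P' ⟨hP, hsP, htP, hmin⟩ ⟨hP', hsP', htP', hmin'⟩
    exact le_antisymm (hmin P' hP' hsP' htP') (hmin' P hP hsP htP)
  obtain ⟨p, hp, hind⟩ := exists_induced_path hG s t
  have hex : IsInducedPathSet G s t p.support.toFinset := ⟨p, hp, hind, rfl⟩
  constructor
  · intro P
    constructor
    · intro hmin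
      have := huniqMin P p.support.toFinset hmin (main1 _ hex)
      rw [this]; exact hex
    · exact main1 P
  · intro P P' h1 h2
    exact huniqMin P P' (main1 P h1) (main1 P' h2)
end

section
/- Let 𝓑 be a connected building set on a finite ground set S and let 𝓝 be a 𝓑-nested set. Set 𝓝⁺ = 𝓝 ∪ {S}, and for N ∈ 𝓝⁺ define X_N = N \ ⋃{N' ∈ 𝓝⁺ : N' ⊊ N}. Then the sets X_N for N ∈ 𝓝⁺ are all nonempty and form a partition of S (they are pairwise disjoint and their union is S). -/
/-- The label set `X_N = N \ ⋃ {N' ∈ 𝓝⁺ : N' ⊊ N}` of an element `N` of the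
augmented nested set `𝓝⁺`. -/
def nestedLabel {V : Type*} (𝓝p : Set (Finset V)) (N : Finset V) : Set V :=
  (N : Set V) \ ⋃ N' ∈ {N' : Finset V | N' ∈ 𝓝p ∧ N' ⊂ N}, (N' : Set V)

lemma mem_nestedLabel_iff {V : Type*} (𝓝p : Set (Finset V)) (N : Finset V) (v : V) :
    v ∈ nestedLabel 𝓝p N ↔ v ∈ N ∧ ∀ N' ∈ 𝓝p, N' ⊂ N → v ∉ N' := by
  unfold nestedLabel
  simp only [Set.mem_diff, Set.mem_iUnion, Finset.mem_coe, Set.mem_setOf_eq, not_exists]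
  tauto

/-- For a connected building set `𝓑` and a `𝓑`-nested set `𝓝`, setting
`𝓝⁺ = 𝓝 ∪ {S}` and `X_N = N \ ⋃ {N' ∈ 𝓝⁺ : N' ⊊ N}`, the sets `X_N` for
`N ∈ 𝓝⁺` are nonempty, pairwise disjoint, and their union is the ground
set. -/
theorem nestedLabels_partition {V : Type*} [Fintype V] [DecidableEq V]
    (𝓑 𝓝 : Set (Finset V)) (hbuild : IsBuilding 𝓑)
    (hconn : (Finset.univ : Finset V) ∈ 𝓑)
    (hnested : IsNested 𝓑 𝓝) :
    (∀ N ∈ 𝓝 ∪ {Finset.univ}, (nestedLabel (𝓝 ∪ {Finset.univ}) N).Nonempty) ∧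
    (∀ N ∈ 𝓝 ∪ {Finset.univ}, ∀ N' ∈ 𝓝 ∪ {Finset.univ}, N ≠ N' →
      Disjoint (nestedLabel (𝓝 ∪ {Finset.univ}) N)
        (nestedLabel (𝓝 ∪ {Finset.univ}) N')) ∧
    (⋃ N ∈ 𝓝 ∪ {Finset.univ}, nestedLabel (𝓝 ∪ {Finset.univ}) N)
      = (Set.univ : Set V) := by
  classical
  obtain ⟨hBne, hBunion, hBsing⟩ := hbuild
  obtain ⟨hsub, hN1, hN2⟩ := hnested
  set 𝓝p : Set (Finset V) := 𝓝 ∪ {Finset.univ} with h𝓝p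
  have hmemB : ∀ N ∈ 𝓝p, N ∈ 𝓑 := by
    intro N hN
    rcases hN with h | h
    · exact (hsub h).1
    · rw [Set.mem_singleton_iff] at h; rw [h]; exact hconn
  have hN1' : ∀ N ∈ 𝓝p, ∀ N' ∈ 𝓝p, N ⊆ N' ∨ N' ⊆ N ∨ N ∩ N' = ∅ := by
    intro N hN N' hN'
    rcases hN with hN | hN
    · rcases hN' with hN' | hN'
      · exact hN1 N hN N' hN'
      · rw [Set.mem_singleton_iff] at hN'; left; rw [hN']; exact Finset.subset_univ N
    · rw [Set.mem_singleton_iff] at hN; right; left; rw [hN]; exact Finset.subset_univ N'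
  -- Nonemptiness
  have hne : ∀ N ∈ 𝓝p, (nestedLabel 𝓝p N).Nonempty := by
    intro N hN
    by_contra hempty
    rw [Set.not_nonempty_iff_eq_empty] at hempty
    have hcover : ∀ v ∈ N, ∃ N' ∈ 𝓝p, N' ⊂ N ∧ v ∈ N' := by
      intro v hv
      by_contra hc
      push_neg at hc
      have hvmem : v ∈ nestedLabel 𝓝p N := by
        rw [mem_nestedLabel_iff]
        exact ⟨hv, fun N' h1 h2 => hc N' h1 h2⟩
      rw [hempty] at hvmem
      exact hvmem
    set T : Set (Finset V) := {N' | N' ∈ 𝓝p ∧ N' ⊂ N} with hT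
    -- every element of T is below a maximal element of T
    have hmaxex : ∀ M ∈ T, ∃ M' ∈ T, M ⊆ M' ∧ ∀ M'' ∈ T, M' ⊆ M'' → M' = M'' := by
      intro M hM
      obtain ⟨M', hM', hmax⟩ :=
        Set.Finite.exists_maximalFor id {M'' ∈ T | M ⊆ M''} (Set.toFinite _) ⟨M, hM, subset_rfl⟩
      exact ⟨M', hM'.1, hM'.2, fun M'' hM'' hsub' =>
        Finset.Subset.antisymm hsub' (hmax ⟨hM'', hM'.2.trans hsub'⟩ hsub')⟩
    set Fs : Set (Finset V) := {M ∈ T | ∀ M'' ∈ T, M ⊆ M'' → M = M''} with hFs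
    set F : Finset (Finset V) := (Set.toFinite Fs).toFinset with hF
    have hmemF : ∀ M, M ∈ F ↔ M ∈ Fs := by
      intro M; rw [hF, Set.Finite.mem_toFinset]
    -- every v ∈ N is in some member of F
    have hcover' : ∀ v ∈ N, ∃ M ∈ F, v ∈ M := by
      intro v hv
      obtain ⟨N', hN', hsubN, hvN'⟩ := hcover v hv
      obtain ⟨M', hM', hsubM, hmax⟩ := hmaxex N' ⟨hN', hsubN⟩
      exact ⟨M', (hmemF M').mpr ⟨hM', hmax⟩, hsubM hvN'⟩
    have hFsub : ↑F ⊆ 𝓝 := by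
      intro M hM
      rw [Finset.mem_coe, hmemF] at hM
      have hMT : M ∈ T := hM.1
      rcases hMT.1 with h | h
      · exact h
      · exfalso
        rw [Set.mem_singleton_iff] at h
        exact hMT.2.not_subset (h ▸ Finset.subset_univ N : N ⊆ M)
    have hdisjF : ∀ M ∈ F, ∀ M' ∈ F, M ≠ M' → M ∩ M' = ∅ := by
      intro M hM M' hM' hneq
      rw [hmemF] at hM hM'
      rcases hN1 M (hFsub (by rw [Finset.mem_coe, hmemF]; exact hM))
          M' (hFsub (by rw [Finset.mem_coe, hmemF]; exact hM')) with h | h | h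
      · exact absurd (hM.2 M' hM'.1 h) hneq
      · exact absurd (hM'.2 M hM.1 h).symm hneq
      · exact h
    have hunion : F.biUnion id = N := by
      apply Finset.Subset.antisymm
      · intro v hv
        rw [Finset.mem_biUnion] at hv
        obtain ⟨M, hM, hvM⟩ := hv
        rw [hmemF] at hM
        exact hM.1.2.1 hvM
      · intro v hv
        obtain ⟨M, hM, hvM⟩ := hcover' v hv
        rw [Finset.mem_biUnion]
        exact ⟨M, hM, hvM⟩
    have hcard : 2 ≤ F.card := by
      obtain ⟨v, hv⟩ := hBne N (hmemB N hN)
      obtain ⟨M, hMF, hvM⟩ := hcover' v hv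
      have hMT : M ∈ T := ((hmemF M).mp hMF).1
      obtain ⟨w, hwN, hwM⟩ := Finset.exists_of_ssubset hMT.2
      obtain ⟨M', hM'F, hwM'⟩ := hcover' w hwN
      rw [Nat.succ_le_iff]
      rw [Finset.one_lt_card]
      exact ⟨M, hMF, M', hM'F, fun h => hwM (h ▸ hwM')⟩
    exact hN2 F hFsub hcard hdisjF (hunion ▸ hmemB N hN)
  refine ⟨hne, ?_, ?_⟩
  · intro N hN N' hN' hneq
    rw [Set.disjoint_left]
    intro v hv hv'
    rw [mem_nestedLabel_iff] at hv hv'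
    rcases hN1' N hN N' hN' with h | h | h
    · exact hv'.2 N hN (Finset.ssubset_iff_subset_ne.mpr ⟨h, hneq⟩) hv.1
    · exact hv.2 N' hN' (Finset.ssubset_iff_subset_ne.mpr ⟨h, fun e => hneq e.symm⟩) hv'.1
    · have : v ∈ N ∩ N' := Finset.mem_inter.mpr ⟨hv.1, hv'.1⟩
      rw [h] at this
      exact absurd this (Finset.notMem_empty v)
  · apply Set.eq_univ_of_forall
    intro v
    have huniv : (Finset.univ : Finset V) ∈ 𝓝p := Or.inr rfl
    obtain ⟨M, hM, hmin⟩ :=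
      Set.Finite.exists_minimalFor id {M ∈ 𝓝p | v ∈ M} (Set.toFinite _)
        ⟨Finset.univ, huniv, Finset.mem_univ v⟩
    rw [Set.mem_iUnion₂]
    refine ⟨M, hM.1, ?_⟩
    rw [mem_nestedLabel_iff]
    refine ⟨hM.2, fun N' hN' hss hvN' => ?_⟩
    exact hss.ne (Finset.Subset.antisymm hss.subset (hmin ⟨hN', hvN'⟩ hss.subset))
end

section
/- Let 𝓑 be a connected building set on a finite ground set S, let 𝓝 be a 𝓑-nested set, set 𝓝⁺ = 𝓝 ∪ {S}, and for N ∈ 𝓝⁺ define X_N = N \ ⋃{N' ∈ 𝓝⁺ : N' ⊊ N}. Then for every C ∈ 𝓑 there is a unique element N(C) ∈ 𝓝⁺ such that C ∩ X_{N(C)} ≠ ∅ and N ⊆ N(C) for every N ∈ 𝓝⁺ with C ∩ X_N ≠ ∅; moreover, N(C) is the inclusion-minimal element of 𝓝⁺ containing C. -/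

lemma chain_total {V : Type*} [Fintype V] [DecidableEq V]
    (𝓑 𝓝 : Set (Finset V)) (hnested : IsNested 𝓑 𝓝) :
    ∀ N ∈ 𝓝 ∪ {Finset.univ}, ∀ N' ∈ 𝓝 ∪ {Finset.univ},
      (N ∩ N').Nonempty → N ⊆ N' ∨ N' ⊆ N := by
  rintro N (hN | hN) N' (hN' | hN') hne
  · rcases hnested.2.1 N hN N' hN' with h | h | h
    · exact Or.inl h
    · exact Or.inr h
    · rw [h] at hne; simp at hne
  · simp only [Set.mem_singleton_iff] at hN'; subst hN'
    exact Or.inl (Finset.subset_univ N)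
  · simp only [Set.mem_singleton_iff] at hN; subst hN
    exact Or.inr (Finset.subset_univ N')
  · simp only [Set.mem_singleton_iff] at hN hN'; subst hN; subst hN'
    exact Or.inl (subset_refl _)

lemma union_mem_building {V : Type*} [DecidableEq V]
    (𝓑 : Set (Finset V)) (hbuild : IsBuilding 𝓑)
    (C : Finset V) (hC : C ∈ 𝓑) :
    ∀ F : Finset (Finset V), (∀ B ∈ F, B ∈ 𝓑 ∧ (B ∩ C).Nonempty) →
      C ∪ F.biUnion id ∈ 𝓑 := by
  intro F
  induction F using Finset.induction_on with
  | empty => intro _; simpa using hC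
  | @insert a F ha ih =>
    intro h
    rw [Finset.biUnion_insert]
    have h1 : C ∪ F.biUnion id ∈ 𝓑 := ih (fun B hB => h B (Finset.mem_insert_of_mem hB))
    have h2 : a ∈ 𝓑 := (h a (Finset.mem_insert_self a F)).1
    have h3 : ((C ∪ F.biUnion id) ∩ a).Nonempty := by
      obtain ⟨x, hx⟩ := (h a (Finset.mem_insert_self a F)).2
      rw [Finset.mem_inter] at hx
      exact ⟨x, Finset.mem_inter.mpr ⟨Finset.mem_union_left _ hx.2, hx.1⟩⟩
    have := hbuild.2.1 _ h1 _ h2 h3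
    have heq : (C ∪ F.biUnion id) ∪ a = C ∪ (id a ∪ F.biUnion id) := by
      rw [Finset.union_assoc, Finset.union_comm (F.biUnion id) a]; rfl
    rwa [heq] at this
/-- For a connected building set `𝓑`, a `𝓑`-nested set `𝓝` with
`𝓝⁺ = 𝓝 ∪ {S}` and labels `X_N = N \ ⋃ {N' ∈ 𝓝⁺ : N' ⊊ N}`, every `C ∈ 𝓑`
admits a unique `N(C) ∈ 𝓝⁺` such that `C ∩ X_{N(C)} ≠ ∅` and `N ⊆ N(C)` for
every `N ∈ 𝓝⁺` with `C ∩ X_N ≠ ∅`; moreover `N(C)` is the inclusion-minimal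
element of `𝓝⁺` containing `C`. -/
theorem exists_unique_nestedSupport {V : Type*} [Fintype V] [DecidableEq V]
    (𝓑 𝓝 : Set (Finset V)) (hbuild : IsBuilding 𝓑)
    (hconn : (Finset.univ : Finset V) ∈ 𝓑)
    (hnested : IsNested 𝓑 𝓝) :
    ∀ C ∈ 𝓑, ∃! N₀ : Finset V, N₀ ∈ 𝓝 ∪ {Finset.univ} ∧
      ((C : Set V) ∩ nestedLabel (𝓝 ∪ {Finset.univ}) N₀).Nonempty ∧
      (∀ N ∈ 𝓝 ∪ {Finset.univ},
        ((C : Set V) ∩ nestedLabel (𝓝 ∪ {Finset.univ}) N).Nonempty → N ⊆ N₀) ∧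
      C ⊆ N₀ ∧
      (∀ N ∈ 𝓝 ∪ {Finset.univ}, C ⊆ N → N₀ ⊆ N) := by
  classical
  intro C hC
  have hCne : C.Nonempty := hbuild.1 C hC
  set 𝓝p : Set (Finset V) := 𝓝 ∪ {Finset.univ} with h𝓝p
  set T : Finset (Finset V) :=
    Finset.univ.filter (fun N => N ∈ 𝓝p ∧ C ⊆ N) with hT
  have hTuniv : (Finset.univ : Finset V) ∈ T := by
    simp [hT, h𝓝p]
  obtain ⟨N₀, hN₀T, hmincard⟩ := T.exists_min_image Finset.card ⟨_, hTuniv⟩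
  have hN₀mem : N₀ ∈ 𝓝p := (Finset.mem_filter.mp hN₀T).2.1
  have hCsub : C ⊆ N₀ := (Finset.mem_filter.mp hN₀T).2.2
  have hminimal : ∀ N ∈ 𝓝p, C ⊆ N → N₀ ⊆ N := by
    intro N hN hCN
    have hNT : N ∈ T := by simp [hT, hN, hCN]
    have hne : (N₀ ∩ N).Nonempty :=
      hCne.mono (Finset.subset_inter hCsub hCN)
    rcases chain_total 𝓑 𝓝 hnested N₀ hN₀mem N hN hne with h | h
    · exact h
    · have heq : N = N₀ := Finset.eq_of_subset_of_card_le h (hmincard N hNT)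
      rw [heq]
  have hlabel : ((C : Set V) ∩ nestedLabel 𝓝p N₀).Nonempty := by
    by_contra hemp
    rw [Set.not_nonempty_iff_eq_empty] at hemp
    -- every point of C lies in a proper 𝓝p-subset of N₀
    have hcov : ∀ x ∈ C, ∃ N' ∈ 𝓝p, N' ⊂ N₀ ∧ x ∈ N' := by
      intro x hx
      have hxn : (x : V) ∉ ((C : Set V) ∩ nestedLabel 𝓝p N₀) := by
        rw [hemp]; exact Set.notMem_empty x
      have hxN₀ : x ∈ N₀ := hCsub hx
      by_contra hcon
      push_neg at hcon
      apply hxn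
      refine ⟨hx, ?_, ?_⟩
      · exact hxN₀
      · intro hxmem
        simp only [Set.mem_iUnion, Set.mem_setOf_eq] at hxmem
        obtain ⟨N', hN'm, hxN'⟩ := hxmem
        exact hcon N' hN'm.1 hN'm.2 hxN'
    set D : Finset (Finset V) :=
      Finset.univ.filter (fun N' => N' ∈ 𝓝p ∧ N' ⊂ N₀ ∧ (N' ∩ C).Nonempty)
      with hD
    set F : Finset (Finset V) :=
      D.filter (fun M => ∀ N' ∈ D, M ⊆ N' → M = N') with hF
    have hmemD : ∀ N' ∈ D, N' ∈ 𝓝p ∧ N' ⊂ N₀ ∧ (N' ∩ C).Nonempty := by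
      intro N' hN'
      exact (Finset.mem_filter.mp hN').2
    have hD𝓝 : ∀ N' ∈ D, N' ∈ 𝓝 := by
      intro N' hN'
      obtain ⟨hmem, hss, _⟩ := hmemD N' hN'
      rw [h𝓝p, Set.mem_union] at hmem
      rcases hmem with h | h
      · exact h
      · exfalso
        simp only [Set.mem_singleton_iff] at h
        subst h
        exact hss.2 (Finset.subset_univ N₀)
    -- every element of D is below a maximal one
    have hmax : ∀ a ∈ D, ∃ M ∈ F, a ⊆ M := by
      intro a ha
      set s : Finset (Finset V) := D.filter (fun b => a ⊆ b) with hs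
      have has : a ∈ s := by simp [hs, ha]
      obtain ⟨M, hMs, hMmax⟩ := s.exists_max_image Finset.card ⟨a, has⟩
      have hMD : M ∈ D := (Finset.mem_filter.mp hMs).1
      have haM : a ⊆ M := (Finset.mem_filter.mp hMs).2
      refine ⟨M, ?_, haM⟩
      rw [hF, Finset.mem_filter]
      refine ⟨hMD, ?_⟩
      intro N' hN'D hMN'
      have hN's : N' ∈ s := by
        rw [hs, Finset.mem_filter]; exact ⟨hN'D, haM.trans hMN'⟩
      exact Finset.eq_of_subset_of_card_le hMN' (hMmax N' hN's)
    -- elements of F are pairwise disjoint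
    have hdisj : ∀ M ∈ F, ∀ M' ∈ F, M ≠ M' → M ∩ M' = ∅ := by
      intro M hM M' hM' hne
      by_contra hcon
      have hnonemp : (M ∩ M').Nonempty := Finset.nonempty_iff_ne_empty.mpr hcon
      have hMD : M ∈ D := (Finset.mem_filter.mp hM).1
      have hM'D : M' ∈ D := (Finset.mem_filter.mp hM').1
      have hMmax := (Finset.mem_filter.mp hM).2
      have hM'max := (Finset.mem_filter.mp hM').2
      rcases chain_total 𝓑 𝓝 hnested M (hmemD M hMD).1 M' (hmemD M' hM'D).1
          hnonemp with h | h
      · exact hne (hMmax M' hM'D h)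
      · exact hne (hM'max M hMD h).symm
    -- C is covered by F
    have hcovF : C ⊆ F.biUnion id := by
      intro x hx
      obtain ⟨N', hN'mem, hN'ss, hxN'⟩ := hcov x hx
      have hN'D : N' ∈ D := by
        rw [hD, Finset.mem_filter]
        exact ⟨Finset.mem_univ _, hN'mem, hN'ss,
          ⟨x, Finset.mem_inter.mpr ⟨hxN', hx⟩⟩⟩
      obtain ⟨M, hMF, hN'M⟩ := hmax N' hN'D
      exact Finset.mem_biUnion.mpr ⟨M, hMF, hN'M hxN'⟩
    -- the union of F is in 𝓑
    have hFB : F.biUnion id ∈ 𝓑 := by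
      have := union_mem_building 𝓑 hbuild C hC F (by
        intro B hB
        have hBD : B ∈ D := (Finset.mem_filter.mp hB).1
        refine ⟨(hnested.1 (hD𝓝 B hBD)).1, ?_⟩
        exact (hmemD B hBD).2.2)
      rwa [Finset.union_eq_right.mpr hcovF] at this
    -- F is nonempty
    have hFne : F.Nonempty := by
      obtain ⟨x, hx⟩ := hCne
      have := hcovF hx
      obtain ⟨M, hM, _⟩ := Finset.mem_biUnion.mp this
      exact ⟨M, hM⟩
    rcases Nat.lt_or_ge F.card 2 with hcard | hcard
    · -- F.card = 1
      interval_cases h : F.card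
      · exact absurd (Finset.card_eq_zero.mp h ▸ hFne) (by simp)
      · obtain ⟨M, hM⟩ := Finset.card_eq_one.mp h
        have hMF : M ∈ F := by simp [hM]
        have hMD : M ∈ D := (Finset.mem_filter.mp hMF).1
        have hMss : M ⊂ N₀ := (hmemD M hMD).2.1
        have hCM : C ⊆ M := by
          intro x hx
          have := hcovF hx
          rw [hM] at this
          simpa using this
        exact hMss.2 (hminimal M (hmemD M hMD).1 hCM)
    · -- F.card ≥ 2
      refine hnested.2.2 F ?_ hcard hdisj hFB
      intro N hN
      exact hD𝓝 N (Finset.mem_filter.mp (Finset.mem_coe.mp hN)).1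
  refine ⟨N₀, ⟨hN₀mem, hlabel, ?_, hCsub, hminimal⟩, ?_⟩
  · intro N hN hNlabel
    obtain ⟨x, hxC, hxX⟩ := hNlabel
    have hxC' : x ∈ C := hxC
    have hxN : x ∈ N := hxX.1
    have hxN₀ : x ∈ N₀ := hCsub hxC'
    have hne : (N ∩ N₀).Nonempty := ⟨x, Finset.mem_inter.mpr ⟨hxN, hxN₀⟩⟩
    rcases chain_total 𝓑 𝓝 hnested N hN N₀ hN₀mem hne with h | h
    · exact h
    · by_contra hns
      have hss : N₀ ⊂ N := ⟨h, fun h' => hns h'⟩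
      apply hxX.2
      simp only [Set.mem_iUnion, Set.mem_setOf_eq]
      exact ⟨N₀, ⟨⟨hN₀mem, hss⟩, hxN₀⟩⟩
  · rintro N₁ ⟨hN₁mem, _, _, hCsubN₁, hmin₁⟩
    exact Finset.Subset.antisymm (hmin₁ N₀ hN₀mem hCsub)
      (hminimal N₁ hN₁mem hCsubN₁)
end
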